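/- Let G be a 2-tough 2K_2-free graph with a minimum-component 2-factor F having more than one cycle. Then every set of co-absorbable vertices is independent in G. -/

import Mathlib

open SimpleGraph

/-- A set of vertices is independent: no two of its members are adjacent. -/
def IsIndepSet {V : Type*} (G : SimpleGraph V) (s : Set V) : Prop :=
  ∀ x ∈ s, ∀ y ∈ s, ¬ G.Adj x y

/-- `G` contains no induced `2K₂`: there are no two disjoint edges with no
edge of `G` between them. -/
def TwoK2Free {V : Type*} (G : SimpleGraph V) : Prop :=
  ¬ ∃ a b c d : V, G.Adj a b ∧ G.Adj c d ∧ a ≠ c ∧ a ≠ d ∧ b ≠ c ∧ b ≠ d ∧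
    ¬ G.Adj a c ∧ ¬ G.Adj a d ∧ ¬ G.Adj b c ∧ ¬ G.Adj b d

/-- The independence number of `G`. -/
noncomputable def indepNum {V : Type*} [Fintype V] (G : SimpleGraph V) : ℕ :=
  sSup {n | ∃ s : Finset V, _root_.IsIndepSet G ↑s ∧ s.card = n}

/-- The number of connected components of a graph. -/
noncomputable def compCount {W : Type*} (H : SimpleGraph W) : ℕ :=
  Nat.card H.ConnectedComponent

/-- `G` is `t`-tough: whenever removing a vertex set `S` disconnects the rest
into more than one component, `|S| ≥ t · ω(G − S)`. -/
def Tough {V : Type*} [Fintype V] (t : ℝ) (G : SimpleGraph V) : Prop :=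
  ∀ S : Finset V,
    1 < compCount (G.induce ((↑S : Set V)ᶜ)) →
    t * compCount (G.induce ((↑S : Set V)ᶜ)) ≤ S.card

/-- An (oriented) `2`-factor of `G`, encoded as a permutation `σ` of the
vertices: each vertex is adjacent to its successor `σ x`, and every cycle of
`σ` has length at least `3`.  The cycles of `σ` are exactly the cycles of the
`2`-factor, with a fixed orientation; the successor of `x` is `σ x` and its
predecessor is `σ⁻¹ x`. -/
def IsTwoFactor {V : Type*} (G : SimpleGraph V) (σ : Equiv.Perm V) : Prop :=
  ∀ x : V, G.Adj x (σ x) ∧ σ (σ x) ≠ x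

/-- The number of components (cycles) of a `2`-factor encoded as a permutation. -/
noncomputable def numCycles {V : Type*} [Fintype V] (σ : Equiv.Perm V) : ℕ :=
  (@Equiv.Perm.cycleType V _ (Classical.decEq V) σ).card

/-- `σ` is a `2`-factor of `G` with the minimum number of components. -/
def IsMinTwoFactor {V : Type*} [Fintype V] (G : SimpleGraph V) (σ : Equiv.Perm V) : Prop :=
  IsTwoFactor G σ ∧ ∀ τ : Equiv.Perm V, IsTwoFactor G τ → numCycles σ ≤ numCycles τ

/-- An (oriented) `2`-factor of `G − x`, encoded as a permutation of `V`
fixing `x`. -/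
def IsTwoFactorAvoiding {V : Type*} (G : SimpleGraph V) (x : V) (σ' : Equiv.Perm V) : Prop :=
  σ' x = x ∧ ∀ y : V, y ≠ x → G.Adj y (σ' y) ∧ σ' (σ' y) ≠ y

/-- `x` is co-absorbable w.r.t. the `2`-factor `σ`: `G − x` has a `2`-factor
with strictly fewer components than `σ`. -/
def CoAbsorbable {V : Type*} [Fintype V] (G : SimpleGraph V) (σ : Equiv.Perm V) (x : V) : Prop :=
  ∃ σ' : Equiv.Perm V, IsTwoFactorAvoiding G x σ' ∧ numCycles σ' < numCycles σ

/-- `x` is of `A`-type w.r.t. the `2`-factor `σ`: some other cycle of `σ`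
contains two consecutive vertices `z`, `σ z` both adjacent to `x`. -/
def AType {V : Type*} (G : SimpleGraph V) (σ : Equiv.Perm V) (x : V) : Prop :=
  ∃ z : V, ¬ σ.SameCycle x z ∧ G.Adj x z ∧ G.Adj x (σ z)

/-- The degree of a vertex. -/
noncomputable def vdeg {V : Type*} (G : SimpleGraph V) (x : V) : ℕ :=
  Nat.card (G.neighborSet x)

set_option linter.unusedSectionVars false


theorem Equiv.Perm.apply_inv_self {α : Type*} (f : Equiv.Perm α) (x : α) : f (f⁻¹ x) = x :=
  f.apply_symm_apply x

theorem Equiv.Perm.inv_apply_self {α : Type*} (f : Equiv.Perm α) (x : α) : f⁻¹ (f x) = x :=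
  f.symm_apply_apply x

theorem Equiv.Perm.sameCycle_inv_apply_right {α : Type*} {f : Equiv.Perm α} {x y : α} :
    f.SameCycle x (f⁻¹ y) ↔ f.SameCycle x y :=
  Equiv.Perm.sameCycle_symm_apply_right

section Aux
open Equiv Equiv.Perm

variable {V : Type*} [Fintype V]

lemma numCycles_eq [inst : DecidableEq V] (σ : Equiv.Perm V) :
    numCycles σ = Multiset.card σ.cycleType := by
  unfold numCycles
  rw [Subsingleton.elim (Classical.decEq V) inst]

lemma card_ct [DecidableEq V] {d r : Equiv.Perm V} (hd : d.IsCycle) (hdis : d.Disjoint r) :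
    Multiset.card (d * r).cycleType = 1 + Multiset.card r.cycleType := by
  rw [Equiv.Perm.Disjoint.cycleType_mul hdis, hd.cycleType]
  simp [add_comm]

lemma pow_comp (f : Equiv.Perm V) (a b : ℕ) (z : V) :
    (f ^ a) ((f ^ b) z) = (f ^ (a + b)) z := by
  rw [pow_add, Equiv.Perm.mul_apply]

lemma sameCycle_closed {f : Equiv.Perm V} {P : V → Prop}
    (h1 : ∀ v, P v → P (f v)) (h2 : ∀ v, P (f v) → P v)
    {a b : V} (hab : f.SameCycle a b) (ha : P a) : P b := by
  obtain ⟨i, hi⟩ := hab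
  subst hi
  have hstep : ∀ m : ℤ, (f ^ (m + 1)) a = f ((f ^ m) a) := by
    intro m
    rw [add_comm, zpow_add, zpow_one, Equiv.Perm.mul_apply]
  induction i using Int.induction_on with
  | zero => simpa using ha
  | succ n ih =>
    rw [hstep]
    exact h1 _ ih
  | pred n ih =>
    have h := hstep (-(n : ℤ) - 1)
    rw [show -(n : ℤ) - 1 + 1 = -(n : ℤ) by ring] at h
    exact h2 _ (by rw [← h]; exact ih)

lemma sameCycle_moved {f : Equiv.Perm V} {x y : V} (h : f.SameCycle x y) (hx : f x ≠ x) :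
    f y ≠ y := fun hy => hx (h.apply_eq_self_iff.2 hy)

lemma isCycle_assemble {d : Equiv.Perm V} {x : V} (hx : d x ≠ x)
    (h : ∀ y, d y ≠ y → d.SameCycle x y) : d.IsCycle :=
  (Equiv.Perm.isCycle_iff_sameCycle hx).2 fun {y} =>
    ⟨fun h' => sameCycle_moved h' hx, h y⟩

lemma chain {c d : Equiv.Perm V} (hc : c.IsCycle) {p u : V} (hp : c p ≠ p) (hu : c u ≠ u)
    (hd : ∀ v, c v ≠ v → v ≠ p → d v = c v) : d.SameCycle (c p) u := by
  classical
  have hcp : c (c p) ≠ c p := fun h => hp (c.injective h)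
  have hex : ∃ n : ℕ, (c ^ n) (c p) = u := by
    obtain ⟨n, hn⟩ := hc.exists_pow_eq hcp hu
    exact ⟨n, hn⟩
  set n := Nat.find hex with hn_def
  have hn : (c ^ n) (c p) = u := Nat.find_spec hex
  have hmin : ∀ m, m < n → (c ^ m) (c p) ≠ u := fun m hm => Nat.find_min hex hm
  have hmoved : ∀ m : ℕ, c ((c ^ m) (c p)) ≠ (c ^ m) (c p) := by
    intro m h
    have : (c ^ m) (c (c p)) = (c ^ m) (c p) := by
      rwa [← Equiv.Perm.mul_apply, ← Equiv.Perm.mul_apply, Commute.self_pow c m] at h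
    exact hcp ((c ^ m).injective this)
  have hstep : ∀ m, m < n → (c ^ m) (c p) ≠ p := by
    intro m hm heq
    apply hmin (n - m - 1) (by omega)
    have h1 : (c ^ (m + 1)) (c p) = c p := by
      rw [pow_succ', Equiv.Perm.mul_apply, heq]
    have h2 : (c ^ (n - m - 1)) ((c ^ (m + 1)) (c p)) = (c ^ n) (c p) := by
      rw [pow_comp, show n - m - 1 + (m + 1) = n by omega]
    rw [← hn, ← h2, h1]
  have key : ∀ m, m ≤ n → (d ^ m) (c p) = (c ^ m) (c p) := by
    intro m
    induction m with
    | zero => intro; rfl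
    | succ m ih =>
      intro hm
      rw [pow_succ', Equiv.Perm.mul_apply, pow_succ', Equiv.Perm.mul_apply, ih (by omega)]
      exact hd _ (hmoved m) (hstep m (by omega))
  exact ⟨(n : ℤ), by rw [zpow_natCast, key n le_rfl, hn]⟩

lemma not_sameCycle_swap_split [DecidableEq V] {σ : Equiv.Perm V} {w w' : V} (hne : w ≠ w')
    (hsc : σ.SameCycle w' w) (h1 : σ w' ≠ w) (h2 : σ w' ≠ w') :
    ¬ (σ * Equiv.swap w w').SameCycle w w' := by
  classical
  intro h
  set s := σ * Equiv.swap w w' with hs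
  have hsw : s w = σ w' := by simp [hs, Equiv.Perm.mul_apply]
  have hsw' : s w' = σ w := by simp [hs, Equiv.Perm.mul_apply]
  have hsv : ∀ v, v ≠ w → v ≠ w' → s v = σ v := by
    intro v hv hv'
    simp [hs, Equiv.Perm.mul_apply, Equiv.swap_apply_of_ne_of_ne hv hv']
  have hex : ∃ m : ℕ, 0 < m ∧ (s ^ m) w = w' := by
    obtain ⟨m, _, hm⟩ := h.exists_pow_eq'
    refine ⟨m, ?_, hm⟩
    rcases Nat.eq_zero_or_pos m with h0 | h0
    · exact absurd (by simpa [h0] using hm) hne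
    · exact h0
  set n := Nat.find hex with hn_def
  obtain ⟨hnpos, hn⟩ : 0 < n ∧ (s ^ n) w = w' := Nat.find_spec hex
  have hminn : ∀ m, m < n → 0 < m → (s ^ m) w ≠ w' := by
    intro m hm h0 heq
    exact Nat.find_min hex hm ⟨h0, heq⟩
  -- main walk: (s^(j+1)) w = (σ^(j+1)) w' for j+1 ≤ n
  have hwalk : ∀ j : ℕ, j + 1 ≤ n → (s ^ (j + 1)) w = (σ ^ (j + 1)) w' := by
    intro j
    induction j with
    | zero => intro; simpa using hsw
    | succ j ih =>
      intro hj
      have hihj := ih (by omega)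
      have hnw' : (σ ^ (j + 1)) w' ≠ w' := by
        intro heq
        exact hminn (j + 1) (by omega) (by omega) (by rw [hihj, heq])
      have hnw : (σ ^ (j + 1)) w' ≠ w := by
        intro heq
        have hsjw : (s ^ (j + 1)) w = w := by rw [hihj, heq]
        apply hminn (n - (j + 1)) (by omega) (by omega)
        calc (s ^ (n - (j + 1))) w = (s ^ (n - (j + 1))) ((s ^ (j + 1)) w) := by rw [hsjw]
        _ = (s ^ n) w := by rw [pow_comp, show n - (j+1) + (j+1) = n by omega]
        _ = w' := hn
      have lhs : (s ^ (j + 1 + 1)) w = s ((s ^ (j + 1)) w) := by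
        rw [pow_succ', Equiv.Perm.mul_apply]
      have rhs : (σ ^ (j + 1 + 1)) w' = σ ((σ ^ (j + 1)) w') := by
        rw [pow_succ', Equiv.Perm.mul_apply]
      rw [lhs, rhs, hihj, hsv _ hnw hnw']
  have hfix : (σ ^ n) w' = w' := by
    have := hwalk (n - 1) (by omega)
    rw [show n - 1 + 1 = n by omega] at this
    rw [← this, hn]
  have havoid : ∀ j, 0 < j → j < n → (σ ^ j) w' ≠ w := by
    intro j hj0 hjn heq
    have hw := hwalk (j - 1) (by omega)
    rw [show j - 1 + 1 = j by omega] at hw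
    have hsjw : (s ^ j) w = w := by rw [hw, heq]
    apply hminn (n - j) (by omega) (by omega)
    calc (s ^ (n - j)) w = (s ^ (n - j)) ((s ^ j) w) := by rw [hsjw]
    _ = (s ^ n) w := by rw [pow_comp, show n - j + j = n by omega]
    _ = w' := hn
  -- now σ-orbit: some power of σ sends w' to w
  obtain ⟨m, _, hm⟩ := hsc.exists_pow_eq'
  have hperiod : ∀ k : ℕ, (σ ^ (n * k)) w' = w' := by
    intro k
    induction k with
    | zero => simp
    | succ k ih =>
      rw [Nat.mul_succ, pow_add, Equiv.Perm.mul_apply, hfix, ih]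
  have hmod : (σ ^ (m % n)) w' = w := by
    have e : (σ ^ (m % n)) ((σ ^ (n * (m / n))) w') = (σ ^ m) w' := by
      rw [pow_comp, Nat.mod_add_div]
    rw [hperiod] at e
    rw [e, hm]

  rcases Nat.eq_zero_or_pos (m % n) with h0 | h0
  · rw [h0] at hmod; simp at hmod; exact hne hmod.symm
  · exact havoid (m % n) h0 (Nat.mod_lt _ hnpos) hmod


lemma cycleOf_inv_apply {f : Equiv.Perm V} [DecidableRel f.SameCycle] {w u : V} :
    (f.cycleOf w)⁻¹ u = if f.SameCycle w u then f⁻¹ u else u := by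
  apply (f.cycleOf w).injective
  rw [Equiv.Perm.apply_inv_self]
  by_cases h : f.SameCycle w u
  · rw [if_pos h]
    have h2 : f.SameCycle w (f⁻¹ u) := Equiv.Perm.sameCycle_inv_apply_right.2 h
    rw [h2.cycleOf_apply, Equiv.Perm.apply_inv_self]
  · rw [if_neg h, Equiv.Perm.cycleOf_apply_of_not_sameCycle h]

lemma no_insert {G : SimpleGraph V} {σ σ' : Equiv.Perm V}
    (hmin : IsMinTwoFactor G σ) {x : V} (h' : IsTwoFactorAvoiding G x σ')
    (hlt : numCycles σ' < numCycles σ) {z : V} (hz1 : G.Adj x z) (hz2 : G.Adj x (σ' z)) :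
    False := by
  classical
  obtain ⟨hfix, hav⟩ := h'
  have hzx : z ≠ x := fun h => G.irrefl (h ▸ hz1)
  have hmoved : ∀ u, u ≠ x → σ' u ≠ u := fun u hu h => ((hav u hu).1.ne) h.symm
  have hzz : σ' z ≠ z := hmoved z hzx
  have hsc_fix : ∀ u, σ' u ≠ u → ¬ σ'.SameCycle u x := fun u hu h =>
    (sameCycle_moved h hu) hfix
  set c := σ'.cycleOf z with hc
  set r := c⁻¹ * σ' with hr
  have hr_app : ∀ u, r u = if σ'.SameCycle z u then u else σ' u := by
    intro u
    rw [hr, Equiv.Perm.mul_apply]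
    by_cases h : σ'.SameCycle z u
    · rw [if_pos h, hc, cycleOf_inv_apply, if_pos (Equiv.Perm.sameCycle_apply_right.2 h),
        Equiv.Perm.inv_apply_self]
    · rw [if_neg h, hc, cycleOf_inv_apply,
        if_neg (fun hh => h (Equiv.Perm.sameCycle_apply_right.1 hh))]
  set d := c * Equiv.swap x z with hd
  have hdx : d x = σ' z := by
    rw [hd, Equiv.Perm.mul_apply, Equiv.swap_apply_left, hc, Equiv.Perm.cycleOf_apply_self]
  have hdz : d z = x := by
    rw [hd, Equiv.Perm.mul_apply, Equiv.swap_apply_right, hc]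
    exact Equiv.Perm.cycleOf_apply_of_not_sameCycle (hsc_fix z hzz)
  have hdother : ∀ u, u ≠ x → u ≠ z → d u = c u := by
    intro u h1 h2; rw [hd, Equiv.Perm.mul_apply, Equiv.swap_apply_of_ne_of_ne h1 h2]
  have hdfix : ∀ u, u ≠ x → ¬ σ'.SameCycle z u → d u = u := by
    intro u h1 h2
    rw [hdother u h1 (fun h => h2 (by subst h; exact Equiv.Perm.SameCycle.rfl)), hc]
    exact Equiv.Perm.cycleOf_apply_of_not_sameCycle h2
  have hdin : ∀ u, u ≠ z → σ'.SameCycle z u → d u = σ' u := by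
    intro u h1 h2
    have hux : u ≠ x := fun h => hsc_fix z hzz (h ▸ h2)
    rw [hdother u hux h1, hc, h2.cycleOf_apply]
  set τ := d * r with hτ
  have hτx : τ x = σ' z := by
    rw [hτ, Equiv.Perm.mul_apply, hr_app, if_neg (fun h => hsc_fix z hzz h), hfix, hdx]
  have hτz : τ z = x := by
    rw [hτ, Equiv.Perm.mul_apply, hr_app, if_pos Equiv.Perm.SameCycle.rfl, hdz]
  have hτelse : ∀ u, u ≠ x → u ≠ z → τ u = σ' u := by
    intro u h1 h2
    rw [hτ, Equiv.Perm.mul_apply, hr_app]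
    by_cases h : σ'.SameCycle z u
    · rw [if_pos h]; exact hdin u h2 h
    · rw [if_neg h]
      have h1' : σ' u ≠ x := fun hh => h1 (σ'.injective (by rw [hh, hfix]))
      exact hdfix (σ' u) h1' (fun hh => h (Equiv.Perm.sameCycle_apply_right.1 hh))
  have hσ'z_x : σ' z ≠ x := fun h => hzx (σ'.injective (by rw [h, hfix]))
  have htf : IsTwoFactor G τ := by
    intro u
    by_cases hux : u = x
    · subst hux
      refine ⟨by rw [hτx]; exact hz2, ?_⟩
      rw [hτx, hτelse (σ' z) hσ'z_x hzz]
      intro hh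
      rw [← hfix] at hh
      exact hσ'z_x (σ'.injective hh)
    · by_cases huz : u = z
      · subst huz
        exact ⟨by rw [hτz]; exact hz1.symm, by rw [hτz, hτx]; exact hzz⟩
      · refine ⟨by rw [hτelse u hux huz]; exact (hav u hux).1, ?_⟩
        rw [hτelse u hux huz]
        by_cases hsz : σ' u = z
        · rw [hsz, hτz]; exact fun h => hux h.symm
        · have hsx : σ' u ≠ x := fun h => hux (σ'.injective (by rw [h, hfix]))
          rw [hτelse (σ' u) hsx hsz]
          exact (hav u hux).2
  have hcyc_c : c.IsCycle := Equiv.Perm.isCycle_cycleOf σ' hzz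
  have hdis_cr : c.Disjoint r := by
    intro v
    by_cases h : σ'.SameCycle z v
    · right; rw [hr_app, if_pos h]
    · left; rw [hc]; exact Equiv.Perm.cycleOf_apply_of_not_sameCycle h
  have hcount_σ' : Multiset.card σ'.cycleType = 1 + Multiset.card r.cycleType := by
    conv_lhs => rw [(mul_inv_cancel_left c σ').symm]
    exact card_ct hcyc_c hdis_cr
  have hdcyc : d.IsCycle := by
    apply isCycle_assemble (x := x) (by rw [hdx]; exact hσ'z_x)
    intro y hy
    have hy' : y = x ∨ σ'.SameCycle z y := by
      by_contra hcon
      push_neg at hcon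
      exact hy (hdfix y hcon.1 hcon.2)
    rcases hy' with rfl | hy'
    · exact Equiv.Perm.SameCycle.rfl
    · have hlink : d.SameCycle x (c z) := ⟨1, by
        rw [zpow_one, hdx, hc, Equiv.Perm.cycleOf_apply_self]⟩
      refine hlink.trans (chain hcyc_c (p := z) ?_ ?_ ?_)
      · rw [hc, Equiv.Perm.cycleOf_apply_self]; exact hzz
      · rw [hc, hy'.cycleOf_apply]
        exact hmoved y (fun h => hsc_fix z hzz (h ▸ hy'))
      · intro v hv hvz
        have hsv : σ'.SameCycle z v := by
          by_contra hcon
          exact hv (by rw [hc]; exact Equiv.Perm.cycleOf_apply_of_not_sameCycle hcon)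
        rw [hdin v hvz hsv, hc, hsv.cycleOf_apply]
  have hdis_dr : d.Disjoint r := by
    intro v
    by_cases h : σ'.SameCycle z v
    · right; rw [hr_app, if_pos h]
    · by_cases hvx : v = x
      · right; subst hvx; rw [hr_app, if_neg h, hfix]
      · left; exact hdfix v hvx h
  have hcount_τ : Multiset.card τ.cycleType = 1 + Multiset.card r.cycleType :=
    card_ct hdcyc hdis_dr
  have hmono := hmin.2 τ htf
  rw [numCycles_eq σ, numCycles_eq τ] at hmono
  rw [numCycles_eq σ, numCycles_eq σ'] at hlt
  omega


lemma no_cross {G : SimpleGraph V} {σ σ' : Equiv.Perm V}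
    (hmin : IsMinTwoFactor G σ) {x : V} (h' : IsTwoFactorAvoiding G x σ')
    (hlt : numCycles σ' < numCycles σ) {w w' : V} (hxw : G.Adj x w) (hxw' : G.Adj x w')
    (hnsc : ¬ σ'.SameCycle w w') (hadj : G.Adj (σ' w) (σ' w')) : False := by
  classical
  obtain ⟨hfix, hav⟩ := h'
  have hwx : w ≠ x := fun h => G.irrefl (h ▸ hxw)
  have hw'x : w' ≠ x := fun h => G.irrefl (h ▸ hxw')
  have hmoved : ∀ u, u ≠ x → σ' u ≠ u := fun u hu h => ((hav u hu).1.ne) h.symm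
  have hmw : σ' w ≠ w := hmoved w hwx
  have hmw' : σ' w' ≠ w' := hmoved w' hw'x
  have hsc_fix : ∀ u, σ' u ≠ u → ¬ σ'.SameCycle u x := fun u hu h =>
    (sameCycle_moved h hu) hfix
  have hww' : w ≠ w' := fun h => hnsc (by rw [h])
  have hnsc' : ¬ σ'.SameCycle w' w := fun h => hnsc h.symm
  have hscw_sw : σ'.SameCycle w (σ' w) := ⟨1, by simp⟩
  have hscw'_sw' : σ'.SameCycle w' (σ' w') := ⟨1, by simp⟩
  have hswx : σ' w ≠ x := fun h => hwx (σ'.injective (by rw [h, hfix]))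
  have hsw'x : σ' w' ≠ x := fun h => hw'x (σ'.injective (by rw [h, hfix]))
  have hsw_w' : σ' w ≠ w' := fun h => hnsc (h ▸ hscw_sw)
  have hsw'_w : σ' w' ≠ w := fun h => hnsc' (h ▸ hscw'_sw')
  have hsw_sw' : σ' w ≠ σ' w' := fun h => hww' (σ'.injective h)
  set c1 := σ'.cycleOf w with hc1
  set c2 := σ'.cycleOf w' with hc2
  have hc1_app : ∀ u, c1 u = if σ'.SameCycle w u then σ' u else u := fun u =>
    σ'.cycleOf_apply w u
  have hc2_app : ∀ u, c2 u = if σ'.SameCycle w' u then σ' u else u := fun u =>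
    σ'.cycleOf_apply w' u
  have hc1inv_app : ∀ u, c1⁻¹ u = if σ'.SameCycle w u then σ'⁻¹ u else u := fun u =>
    cycleOf_inv_apply
  set r := c2⁻¹ * (c1⁻¹ * σ') with hr
  have hr_app : ∀ u, r u = if σ'.SameCycle w u ∨ σ'.SameCycle w' u then u else σ' u := by
    intro u
    rw [hr, Equiv.Perm.mul_apply, Equiv.Perm.mul_apply, hc1inv_app]
    by_cases h1 : σ'.SameCycle w u
    · rw [if_pos (Equiv.Perm.sameCycle_apply_right.2 h1), Equiv.Perm.inv_apply_self,
        if_pos (Or.inl h1), hc2, cycleOf_inv_apply,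
        if_neg (fun hh => hnsc (h1.trans hh.symm))]
    · rw [if_neg (fun hh => h1 (Equiv.Perm.sameCycle_apply_right.1 hh)), hc2, cycleOf_inv_apply]
      by_cases h2 : σ'.SameCycle w' u
      · rw [if_pos (Equiv.Perm.sameCycle_apply_right.2 h2), Equiv.Perm.inv_apply_self,
          if_pos (Or.inr h2)]
      · rw [if_neg (fun hh => h2 (Equiv.Perm.sameCycle_apply_right.1 hh)),
          if_neg (by push_neg; exact ⟨h1, h2⟩)]
  set d := c2 * c1⁻¹ * Equiv.swap x w' * Equiv.swap x (σ' w) with hd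
  have hd_eval : ∀ u, d u = c2 (c1⁻¹ (Equiv.swap x w' (Equiv.swap x (σ' w) u))) := by
    intro u; rw [hd]; rfl
  have hc1inv_fix : ∀ u, ¬ σ'.SameCycle w u → c1⁻¹ u = u := by
    intro u h; rw [hc1inv_app, if_neg h]
  have hc2_fix : ∀ u, ¬ σ'.SameCycle w' u → c2 u = u := by
    intro u h; rw [hc2_app, if_neg h]
  have hdx : d x = w := by
    rw [hd_eval, Equiv.swap_apply_left, Equiv.swap_apply_of_ne_of_ne hswx hsw_w',
      hc1inv_app, if_pos hscw_sw, Equiv.Perm.inv_apply_self, hc2_fix w hnsc']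
  have hdsw : d (σ' w) = σ' w' := by
    rw [hd_eval, Equiv.swap_apply_right, Equiv.swap_apply_left, hc1inv_fix w' hnsc,
      hc2_app, if_pos Equiv.Perm.SameCycle.rfl]
  have hdw' : d w' = x := by
    rw [hd_eval, Equiv.swap_apply_of_ne_of_ne hw'x (Ne.symm hsw_w'), Equiv.swap_apply_right,
      hc1inv_fix x (fun h => hsc_fix w hmw h), hc2_fix x (fun h => hsc_fix w' hmw' h)]
  have hdC1 : ∀ v, σ'.SameCycle w v → v ≠ σ' w → d v = σ'⁻¹ v := by
    intro v hv hvs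
    have hvx : v ≠ x := fun h => hsc_fix w hmw (h ▸ hv)
    have hvw' : v ≠ w' := fun h => hnsc (h ▸ hv)
    rw [hd_eval, Equiv.swap_apply_of_ne_of_ne hvx hvs, Equiv.swap_apply_of_ne_of_ne hvx hvw',
      hc1inv_app, if_pos hv, hc2_fix _ (fun h => hnsc
        ((Equiv.Perm.sameCycle_inv_apply_right.2 hv).trans h.symm))]
  have hdC2 : ∀ v, σ'.SameCycle w' v → v ≠ w' → d v = σ' v := by
    intro v hv hvw'
    have hvx : v ≠ x := fun h => hsc_fix w' hmw' (h ▸ hv)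
    have hvs : v ≠ σ' w := fun h => hnsc (hscw_sw.trans (h ▸ hv).symm)
    rw [hd_eval, Equiv.swap_apply_of_ne_of_ne hvx hvs, Equiv.swap_apply_of_ne_of_ne hvx hvw',
      hc1inv_fix _ (fun h => hnsc (h.trans hv.symm)), hc2_app, if_pos hv]
  have hdfix : ∀ v, v ≠ x → ¬ σ'.SameCycle w v → ¬ σ'.SameCycle w' v → d v = v := by
    intro v hvx h1 h2
    have hvs : v ≠ σ' w := fun h => h1 (h ▸ hscw_sw)
    have hvw' : v ≠ w' := fun h => h2 (by rw [h])
    rw [hd_eval, Equiv.swap_apply_of_ne_of_ne hvx hvs, Equiv.swap_apply_of_ne_of_ne hvx hvw',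
      hc1inv_fix _ h1, hc2_fix _ h2]
  set τ := d * r with hτ
  have hrfixed : ∀ u, σ'.SameCycle w u ∨ σ'.SameCycle w' u → r u = u := by
    intro u h; rw [hr_app, if_pos h]
  have hτx : τ x = w := by
    rw [hτ, Equiv.Perm.mul_apply, hr_app,
      if_neg (by push_neg; exact ⟨fun h => hsc_fix w hmw h, fun h => hsc_fix w' hmw' h⟩),
      hfix, hdx]
  have hτsw : τ (σ' w) = σ' w' := by
    rw [hτ, Equiv.Perm.mul_apply, hrfixed _ (Or.inl hscw_sw), hdsw]
  have hτw' : τ w' = x := by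
    rw [hτ, Equiv.Perm.mul_apply, hrfixed _ (Or.inr Equiv.Perm.SameCycle.rfl), hdw']
  have hτC1 : ∀ v, σ'.SameCycle w v → v ≠ σ' w → τ v = σ'⁻¹ v := by
    intro v hv hvs
    rw [hτ, Equiv.Perm.mul_apply, hrfixed _ (Or.inl hv), hdC1 v hv hvs]
  have hτC2 : ∀ v, σ'.SameCycle w' v → v ≠ w' → τ v = σ' v := by
    intro v hv hvw'
    rw [hτ, Equiv.Perm.mul_apply, hrfixed _ (Or.inr hv), hdC2 v hv hvw']
  have hτout : ∀ v, v ≠ x → ¬ σ'.SameCycle w v → ¬ σ'.SameCycle w' v → τ v = σ' v := by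
    intro v hvx h1 h2
    rw [hτ, Equiv.Perm.mul_apply, hr_app, if_neg (by push_neg; exact ⟨h1, h2⟩)]
    exact hdfix (σ' v) (fun h => hvx (σ'.injective (by rw [h, hfix])))
      (fun h => h1 (Equiv.Perm.sameCycle_apply_right.1 h))
      (fun h => h2 (Equiv.Perm.sameCycle_apply_right.1 h))
  have hinv_ne_x : ∀ v, v ≠ x → σ'⁻¹ v ≠ x := by
    intro v hv h
    exact hv (by rw [← hfix, ← h, Equiv.Perm.apply_inv_self])
  have hadj_inv : ∀ v, v ≠ x → G.Adj v (σ'⁻¹ v) := by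
    intro v hv
    have h := (hav (σ'⁻¹ v) (hinv_ne_x v hv)).1
    rw [Equiv.Perm.apply_inv_self] at h
    exact h.symm
  have htf : IsTwoFactor G τ := by
    intro u
    by_cases hux : u = x
    · subst hux
      refine ⟨by rw [hτx]; exact hxw, ?_⟩
      rw [hτx, hτC1 w Equiv.Perm.SameCycle.rfl (Ne.symm hmw)]
      intro h
      exact hwx (by rw [← Equiv.Perm.apply_inv_self σ' w, h]; exact hfix)
    · by_cases husw : u = σ' w
      · rw [husw]
        refine ⟨by rw [hτsw]; exact hadj, ?_⟩
        rw [hτsw, hτC2 (σ' w') hscw'_sw' hmw']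
        exact fun h => hsw'_w (σ'.injective h)
      · by_cases huw' : u = w'
        · rw [huw']
          exact ⟨by rw [hτw']; exact hxw'.symm, by rw [hτw', hτx]; exact hww'⟩
        · by_cases hu1 : σ'.SameCycle w u
          · refine ⟨by rw [hτC1 u hu1 husw]; exact hadj_inv u hux, ?_⟩
            rw [hτC1 u hu1 husw]
            have husc : σ'.SameCycle w (σ'⁻¹ u) := Equiv.Perm.sameCycle_inv_apply_right.2 hu1
            by_cases h2 : σ'⁻¹ u = σ' w
            · rw [h2, hτsw]
              intro h
              exact hnsc (hu1.trans (h ▸ hscw'_sw').symm)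
            · rw [hτC1 (σ'⁻¹ u) husc h2]
              intro h
              have h3 : σ'⁻¹ u = σ' u := by
                have h5 := congrArg σ' h
                rwa [Equiv.Perm.apply_inv_self] at h5
              have h4 : u = σ' (σ' u) := by
                have h5 := congrArg σ' h3
                rwa [Equiv.Perm.apply_inv_self] at h5
              exact (hav u hux).2 h4.symm
          · by_cases hu2 : σ'.SameCycle w' u
            · refine ⟨by rw [hτC2 u hu2 huw']; exact (hav u hux).1, ?_⟩
              rw [hτC2 u hu2 huw']
              by_cases h2 : σ' u = w'
              · rw [h2, hτw']; exact fun h => hux h.symm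
              · rw [hτC2 (σ' u) (Equiv.Perm.sameCycle_apply_right.2 hu2) h2]
                exact (hav u hux).2
            · refine ⟨by rw [hτout u hux hu1 hu2]; exact (hav u hux).1, ?_⟩
              rw [hτout u hux hu1 hu2]
              have hsx : σ' u ≠ x := fun h => hux (σ'.injective (by rw [h, hfix]))
              rw [hτout (σ' u) hsx (fun h => hu1 (Equiv.Perm.sameCycle_apply_right.1 h))
                (fun h => hu2 (Equiv.Perm.sameCycle_apply_right.1 h))]
              exact (hav u hux).2
  have hcyc1 : c1.IsCycle := Equiv.Perm.isCycle_cycleOf σ' hmw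
  have hcyc2 : c2.IsCycle := Equiv.Perm.isCycle_cycleOf σ' hmw'
  have hc1_fix : ∀ u, ¬ σ'.SameCycle w u → c1 u = u := fun u h => by
    rw [hc1_app, if_neg h]
  have hdis_c2r : c2.Disjoint r := by
    intro v
    by_cases h : σ'.SameCycle w' v
    · right; exact hrfixed v (Or.inr h)
    · left; exact hc2_fix v h
  have hdis_c1_c2r : c1.Disjoint (c2 * r) := by
    intro v
    by_cases h : σ'.SameCycle w v
    · right
      rw [Equiv.Perm.mul_apply, hrfixed v (Or.inl h), hc2_fix v (fun hh => hnsc (h.trans hh.symm))]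
    · left; exact hc1_fix v h
  have hfact : c1 * (c2 * r) = σ' := by rw [hr, mul_inv_cancel_left, mul_inv_cancel_left]
  have hcount_σ' : Multiset.card σ'.cycleType = 2 + Multiset.card r.cycleType := by
    conv_lhs => rw [← hfact]
    rw [card_ct hcyc1 hdis_c1_c2r, card_ct hcyc2 hdis_c2r]
    omega
  have hdcyc : d.IsCycle := by
    apply isCycle_assemble (x := x) (by rw [hdx]; exact hwx)
    have hchain1 : ∀ u, σ'.SameCycle w u → d.SameCycle x u := by
      intro u hu
      have hlink : d.SameCycle x w := ⟨1, by rw [zpow_one, hdx]⟩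
      refine hlink.trans ?_
      have hkey : c1⁻¹ (σ' w) = w := by
        rw [hc1inv_app, if_pos hscw_sw, Equiv.Perm.inv_apply_self]
      have hch : d.SameCycle (c1⁻¹ (σ' w)) u := by
        apply chain hcyc1.inv
        · rw [hkey]; exact Ne.symm hmw
        · rw [hc1inv_app, if_pos hu]
          intro h
          have h2 : u = σ' u := by
            have h3 := congrArg σ' h
            rwa [Equiv.Perm.apply_inv_self] at h3
          exact hmoved u (fun hx0 => hsc_fix w hmw (hx0 ▸ hu)) h2.symm
        · intro v hv hvp
          have hscv : σ'.SameCycle w v := by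
            by_contra hcon
            exact hv (hc1inv_fix v hcon)
          rw [hdC1 v hscv hvp, hc1inv_app, if_pos hscv]
      exact hkey ▸ hch
    have hchain2 : ∀ u, σ'.SameCycle w' u → d.SameCycle x u := by
      intro u hu
      have hlink : d.SameCycle x (σ' w') :=
        (hchain1 (σ' w) hscw_sw).trans ⟨1, by rw [zpow_one, hdsw]⟩
      refine hlink.trans ?_
      have hkey : c2 w' = σ' w' := by rw [hc2_app, if_pos Equiv.Perm.SameCycle.rfl]
      have hch : d.SameCycle (c2 w') u := by
        apply chain hcyc2
        · rw [hkey]; exact hmw'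
        · rw [hc2_app, if_pos hu]
          exact hmoved u (fun hx0 => hsc_fix w' hmw' (hx0 ▸ hu))
        · intro v hv hvp
          have hscv : σ'.SameCycle w' v := by
            by_contra hcon; exact hv (by rw [hc2_app, if_neg hcon])
          rw [hdC2 v hscv hvp, hc2_app, if_pos hscv]
      exact hkey ▸ hch
    intro y hy
    have hy' : y = x ∨ σ'.SameCycle w y ∨ σ'.SameCycle w' y := by
      by_contra hcon; push_neg at hcon
      exact hy (hdfix y hcon.1 hcon.2.1 hcon.2.2)
    rcases hy' with rfl | hy' | hy'
    · exact Equiv.Perm.SameCycle.rfl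
    · exact hchain1 y hy'
    · exact hchain2 y hy'
  have hdis_dr : d.Disjoint r := by
    intro v
    by_cases h : σ'.SameCycle w v ∨ σ'.SameCycle w' v
    · right; exact hrfixed v h
    · push_neg at h
      by_cases hvx : v = x
      · right; subst hvx; rw [hr_app, if_neg (by push_neg; exact h), hfix]
      · left; exact hdfix v hvx h.1 h.2
  have hcount_τ : Multiset.card τ.cycleType = 1 + Multiset.card r.cycleType :=
    card_ct hdcyc hdis_dr
  have hmono := hmin.2 τ htf
  rw [numCycles_eq σ, numCycles_eq τ] at hmono
  rw [numCycles_eq σ, numCycles_eq σ'] at hlt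
  omega


lemma no_same {G : SimpleGraph V} {σ σ' : Equiv.Perm V}
    (hmin : IsMinTwoFactor G σ) {x : V} (h' : IsTwoFactorAvoiding G x σ')
    (hlt : numCycles σ' < numCycles σ) {w w' : V} (hxw : G.Adj x w) (hxw' : G.Adj x w')
    (hsc : σ'.SameCycle w w') (hww' : w ≠ w') (hne1 : σ' w ≠ w') (hne2 : σ' w' ≠ w)
    (hadj : G.Adj (σ' w) (σ' w')) : False := by
  classical
  obtain ⟨hfix, hav⟩ := h'
  have hwx : w ≠ x := fun h => G.irrefl (h ▸ hxw)
  have hw'x : w' ≠ x := fun h => G.irrefl (h ▸ hxw')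
  have hmoved : ∀ u, u ≠ x → σ' u ≠ u := fun u hu h => ((hav u hu).1.ne) h.symm
  have hmw : σ' w ≠ w := hmoved w hwx
  have hmw' : σ' w' ≠ w' := hmoved w' hw'x
  have hsc_fix : ∀ u, σ' u ≠ u → ¬ σ'.SameCycle u x := fun u hu h =>
    (sameCycle_moved h hu) hfix
  have hscw_sw : σ'.SameCycle w (σ' w) := ⟨1, by simp⟩
  have hscw'_sw' : σ'.SameCycle w' (σ' w') := ⟨1, by simp⟩
  have hswx : σ' w ≠ x := fun h => hwx (σ'.injective (by rw [h, hfix]))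
  have hsw'x : σ' w' ≠ x := fun h => hw'x (σ'.injective (by rw [h, hfix]))
  set s := σ' * Equiv.swap w w' with hs
  have hsw : s w = σ' w' := by simp [hs, Equiv.Perm.mul_apply]
  have hsw' : s w' = σ' w := by simp [hs, Equiv.Perm.mul_apply]
  have hsv : ∀ v, v ≠ w → v ≠ w' → s v = σ' v := by
    intro v hv hv'
    simp [hs, Equiv.Perm.mul_apply, Equiv.swap_apply_of_ne_of_ne hv hv']
  have hsplit : ¬ s.SameCycle w w' := not_sameCycle_swap_split hww' hsc.symm hne2 hmw'
  have hXtoC : ∀ u, s.SameCycle w u → σ'.SameCycle w u := by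
    intro u hu
    refine sameCycle_closed (f := s) (P := fun v => σ'.SameCycle w v) ?_ ?_ hu
      Equiv.Perm.SameCycle.rfl
    · intro v hv
      by_cases h1 : v = w
      · subst h1; rw [hsw]; exact hsc.trans hscw'_sw'
      · by_cases h2 : v = w'
        · subst h2; rw [hsw']; exact hscw_sw
        · rw [hsv v h1 h2]; exact Equiv.Perm.sameCycle_apply_right.2 hv
    · intro v hv
      by_cases h1 : v = w
      · subst h1; exact Equiv.Perm.SameCycle.rfl
      · by_cases h2 : v = w'
        · subst h2; exact hsc
        · rw [hsv v h1 h2] at hv; exact Equiv.Perm.sameCycle_apply_right.1 hv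
  have hYtoC : ∀ u, s.SameCycle w' u → σ'.SameCycle w' u := by
    intro u hu
    refine sameCycle_closed (f := s) (P := fun v => σ'.SameCycle w' v) ?_ ?_ hu
      Equiv.Perm.SameCycle.rfl
    · intro v hv
      by_cases h1 : v = w
      · subst h1; rw [hsw]; exact hscw'_sw'
      · by_cases h2 : v = w'
        · subst h2; rw [hsw']; exact hsc.symm.trans hscw_sw
        · rw [hsv v h1 h2]; exact Equiv.Perm.sameCycle_apply_right.2 hv
    · intro v hv
      by_cases h1 : v = w
      · subst h1; exact hsc.symm
      · by_cases h2 : v = w'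
        · subst h2; exact Equiv.Perm.SameCycle.rfl
        · rw [hsv v h1 h2] at hv; exact Equiv.Perm.sameCycle_apply_right.1 hv
  have hCtoXY : ∀ u, σ'.SameCycle w u → s.SameCycle w u ∨ s.SameCycle w' u := by
    intro u hu
    refine sameCycle_closed (f := σ') (P := fun v => s.SameCycle w v ∨ s.SameCycle w' v) ?_ ?_ hu
      (Or.inl Equiv.Perm.SameCycle.rfl)
    · intro v hv
      by_cases h1 : v = w
      · subst h1; exact Or.inr ⟨1, by rw [zpow_one, hsw']⟩
      · by_cases h2 : v = w'
        · subst h2; exact Or.inl ⟨1, by rw [zpow_one, hsw]⟩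
        · rw [← hsv v h1 h2]
          exact hv.imp Equiv.Perm.sameCycle_apply_right.2 Equiv.Perm.sameCycle_apply_right.2
    · intro v hv
      by_cases h1 : v = w
      · subst h1; exact Or.inl Equiv.Perm.SameCycle.rfl
      · by_cases h2 : v = w'
        · subst h2; exact Or.inr Equiv.Perm.SameCycle.rfl
        · rw [← hsv v h1 h2] at hv
          exact hv.imp Equiv.Perm.sameCycle_apply_right.1 Equiv.Perm.sameCycle_apply_right.1
  have hdisjXY : ∀ u, s.SameCycle w u → s.SameCycle w' u → False := fun u h1 h2 =>
    hsplit (h1.trans h2.symm)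
  have hxX : ¬ s.SameCycle w x := fun h => hsc_fix w hmw (hXtoC x h)
  have hxY : ¬ s.SameCycle w' x := fun h => hsc_fix w' hmw' (hYtoC x h)
  have hX_sw' : s.SameCycle w (σ' w') := ⟨1, by rw [zpow_one, hsw]⟩
  have hY_sw : s.SameCycle w' (σ' w) := ⟨1, by rw [zpow_one, hsw']⟩
  have hwY : ¬ s.SameCycle w' w := fun h => hsplit h.symm
  have hw'X : ¬ s.SameCycle w w' := hsplit
  set cX := s.cycleOf w with hcX
  set cY := s.cycleOf w' with hcY
  have hcX_app : ∀ u, cX u = if s.SameCycle w u then s u else u := fun u => s.cycleOf_apply w u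
  have hcYinv_app : ∀ u, cY⁻¹ u = if s.SameCycle w' u then s⁻¹ u else u := fun u =>
    cycleOf_inv_apply
  have hcX_fix : ∀ u, ¬ s.SameCycle w u → cX u = u := fun u h => by rw [hcX_app, if_neg h]
  have hcYinv_fix : ∀ u, ¬ s.SameCycle w' u → cY⁻¹ u = u := fun u h => by
    rw [hcYinv_app, if_neg h]
  set d := cX * cY⁻¹ * Equiv.swap x w * Equiv.swap x (σ' w) with hd
  have hd_eval : ∀ u, d u = cX (cY⁻¹ (Equiv.swap x w (Equiv.swap x (σ' w) u))) := by
    intro u; rw [hd]; rfl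
  have hdx : d x = w' := by
    rw [hd_eval, Equiv.swap_apply_left, Equiv.swap_apply_of_ne_of_ne hswx hmw,
      hcYinv_app, if_pos hY_sw, ← hsw', Equiv.Perm.inv_apply_self, hcX_fix w' hw'X]
  have hdw : d w = x := by
    rw [hd_eval, Equiv.swap_apply_of_ne_of_ne hwx (Ne.symm hmw), Equiv.swap_apply_right,
      hcYinv_fix x hxY, hcX_fix x hxX]
  have hdsw : d (σ' w) = σ' w' := by
    rw [hd_eval, Equiv.swap_apply_right, Equiv.swap_apply_left, hcYinv_fix w hwY,
      hcX_app, if_pos Equiv.Perm.SameCycle.rfl, hsw]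
  have hdY : ∀ v, s.SameCycle w' v → v ≠ σ' w → d v = s⁻¹ v := by
    intro v hv hvs
    have hvx : v ≠ x := fun h => hxY (h ▸ hv)
    have hvw : v ≠ w := fun h => hwY (h ▸ hv)
    rw [hd_eval, Equiv.swap_apply_of_ne_of_ne hvx hvs, Equiv.swap_apply_of_ne_of_ne hvx hvw,
      hcYinv_app, if_pos hv, hcX_fix _ (fun h =>
        hdisjXY _ h (Equiv.Perm.sameCycle_inv_apply_right.2 hv))]
  have hdX : ∀ v, s.SameCycle w v → v ≠ w → d v = s v := by
    intro v hv hvw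
    have hvx : v ≠ x := fun h => hxX (h ▸ hv)
    have hvs : v ≠ σ' w := fun h => hdisjXY v hv (h ▸ hY_sw)
    rw [hd_eval, Equiv.swap_apply_of_ne_of_ne hvx hvs, Equiv.swap_apply_of_ne_of_ne hvx hvw,
      hcYinv_fix _ (fun h => hdisjXY v hv h), hcX_app, if_pos hv]
  have hdfix : ∀ v, v ≠ x → ¬ s.SameCycle w v → ¬ s.SameCycle w' v → d v = v := by
    intro v hvx h1 h2
    have hvs : v ≠ σ' w := fun h => h2 (h ▸ hY_sw)
    have hvw : v ≠ w := fun h => h1 (by rw [h])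
    rw [hd_eval, Equiv.swap_apply_of_ne_of_ne hvx hvs, Equiv.swap_apply_of_ne_of_ne hvx hvw,
      hcYinv_fix _ h2, hcX_fix _ h1]
  have hsinv : ∀ v, s.SameCycle w' v → v ≠ σ' w → s⁻¹ v = σ'⁻¹ v := by
    intro v hv hvs
    have h1 : s⁻¹ v ≠ w := by
      intro h
      have hveq : v = σ' w' := by rw [← Equiv.Perm.apply_inv_self s v, h, hsw]
      exact hdisjXY v (by rw [hveq]; exact hX_sw') hv
    have h2 : s⁻¹ v ≠ w' := by
      intro h
      exact hvs (by rw [← Equiv.Perm.apply_inv_self s v, h, hsw'])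
    have h3 : σ' (s⁻¹ v) = v := by rw [← hsv _ h1 h2, Equiv.Perm.apply_inv_self]
    exact σ'.injective (by rw [h3, Equiv.Perm.apply_inv_self])
  set c := σ'.cycleOf w with hc
  set r := c⁻¹ * σ' with hr
  have hr_app : ∀ u, r u = if σ'.SameCycle w u then u else σ' u := by
    intro u
    rw [hr, Equiv.Perm.mul_apply]
    by_cases h : σ'.SameCycle w u
    · rw [if_pos h, hc, cycleOf_inv_apply, if_pos (Equiv.Perm.sameCycle_apply_right.2 h),
        Equiv.Perm.inv_apply_self]
    · rw [if_neg h, hc, cycleOf_inv_apply,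
        if_neg (fun hh => h (Equiv.Perm.sameCycle_apply_right.1 hh))]
  set τ := d * r with hτ
  have hrfixC : ∀ u, σ'.SameCycle w u → r u = u := fun u h => by rw [hr_app, if_pos h]
  have hτx : τ x = w' := by
    rw [hτ, Equiv.Perm.mul_apply, hr_app, if_neg (fun h => hsc_fix w hmw h), hfix, hdx]
  have hτw : τ w = x := by
    rw [hτ, Equiv.Perm.mul_apply, hrfixC w Equiv.Perm.SameCycle.rfl, hdw]
  have hτsw : τ (σ' w) = σ' w' := by
    rw [hτ, Equiv.Perm.mul_apply, hrfixC _ hscw_sw, hdsw]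
  have hτY : ∀ v, s.SameCycle w' v → v ≠ σ' w → τ v = σ'⁻¹ v := by
    intro v hv hvs
    rw [hτ, Equiv.Perm.mul_apply, hrfixC v (hsc.trans (hYtoC v hv)), hdY v hv hvs,
      hsinv v hv hvs]
  have hτX : ∀ v, s.SameCycle w v → v ≠ w → τ v = σ' v := by
    intro v hv hvw
    have hvw' : v ≠ w' := fun h => hw'X (h ▸ hv)
    rw [hτ, Equiv.Perm.mul_apply, hrfixC v (hXtoC v hv), hdX v hv hvw, hsv v hvw hvw']
  have hτout : ∀ v, v ≠ x → ¬ σ'.SameCycle w v → τ v = σ' v := by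
    intro v hvx hv
    rw [hτ, Equiv.Perm.mul_apply, hr_app, if_neg hv]
    refine hdfix (σ' v) (fun h => hvx (σ'.injective (by rw [h, hfix]))) ?_ ?_
    · exact fun h => hv (Equiv.Perm.sameCycle_apply_right.1 (hXtoC _ h))
    · exact fun h => hv (Equiv.Perm.sameCycle_apply_right.1 (hsc.trans (hYtoC _ h)))
  have hinv_ne_x : ∀ v, v ≠ x → σ'⁻¹ v ≠ x := by
    intro v hv h
    exact hv (by rw [← hfix, ← h, Equiv.Perm.apply_inv_self])
  have hadj_inv : ∀ v, v ≠ x → G.Adj v (σ'⁻¹ v) := by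
    intro v hv
    have h := (hav (σ'⁻¹ v) (hinv_ne_x v hv)).1
    rw [Equiv.Perm.apply_inv_self] at h
    exact h.symm
  have hw'Y : s.SameCycle w' w' := Equiv.Perm.SameCycle.rfl
  have htf : IsTwoFactor G τ := by
    intro u
    by_cases hux : u = x
    · rw [hux]
      refine ⟨by rw [hτx]; exact hxw', ?_⟩
      rw [hτx, hτY w' hw'Y (Ne.symm hne1)]
      intro h
      exact hw'x (by rw [← Equiv.Perm.apply_inv_self σ' w', h]; exact hfix)
    · by_cases huw : u = w
      · rw [huw]
        exact ⟨by rw [hτw]; exact hxw.symm, by rw [hτw, hτx]; exact Ne.symm hww'⟩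
      · by_cases husw : u = σ' w
        · rw [husw]
          refine ⟨by rw [hτsw]; exact hadj, ?_⟩
          rw [hτsw, hτX (σ' w') hX_sw' hne2]
          exact fun h => hne2 (σ'.injective h)
        · by_cases hu1 : s.SameCycle w' u
          · refine ⟨by rw [hτY u hu1 husw]; exact hadj_inv u hux, ?_⟩
            rw [hτY u hu1 husw]
            have hiY : s.SameCycle w' (σ'⁻¹ u) := by
              have h1 : σ'⁻¹ u ≠ w := fun h =>
                husw (by rw [← Equiv.Perm.apply_inv_self σ' u, h])
              have h2 : σ'⁻¹ u ≠ w' := by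
                intro h
                have : u = σ' w' := by rw [← Equiv.Perm.apply_inv_self σ' u, h]
                exact hdisjXY u (by rw [this]; exact hX_sw') hu1
              have h3 : s (σ'⁻¹ u) = u := by rw [hsv _ h1 h2, Equiv.Perm.apply_inv_self]
              exact Equiv.Perm.sameCycle_apply_right.1 (by rw [h3]; exact hu1)
            by_cases h2 : σ'⁻¹ u = σ' w
            · rw [h2, hτsw]
              intro h
              exact hdisjXY u (by rw [← h]; exact hX_sw') hu1
            · rw [hτY (σ'⁻¹ u) hiY h2]
              intro h
              have h3 : σ'⁻¹ u = σ' u := by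
                have h5 := congrArg σ' h
                rwa [Equiv.Perm.apply_inv_self] at h5
              have h4 : u = σ' (σ' u) := by
                have h5 := congrArg σ' h3
                rwa [Equiv.Perm.apply_inv_self] at h5
              exact (hav u hux).2 h4.symm
          · by_cases hu2 : s.SameCycle w u
            · refine ⟨by rw [hτX u hu2 huw]; exact (hav u hux).1, ?_⟩
              rw [hτX u hu2 huw]
              have huw' : u ≠ w' := fun h => hu1 (by rw [h])
              have hsU : s.SameCycle w (σ' u) := by
                rw [← hsv u huw huw']
                exact Equiv.Perm.sameCycle_apply_right.2 hu2
              by_cases h2 : σ' u = w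
              · rw [h2, hτw]
                exact fun h => hux h.symm
              · rw [hτX (σ' u) hsU h2]
                exact (hav u hux).2
            · have hnC : ¬ σ'.SameCycle w u := fun h => (hCtoXY u h).elim hu2 hu1
              refine ⟨by rw [hτout u hux hnC]; exact (hav u hux).1, ?_⟩
              rw [hτout u hux hnC]
              rw [hτout (σ' u) (fun h => hux (σ'.injective (by rw [h, hfix])))
                (fun h => hnC (Equiv.Perm.sameCycle_apply_right.1 h))]
              exact (hav u hux).2
  have hcycX : cX.IsCycle := Equiv.Perm.isCycle_cycleOf s (by rw [hsw]; exact hne2)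
  have hcycY : cY.IsCycle := Equiv.Perm.isCycle_cycleOf s (by rw [hsw']; exact hne1)
  have hcycc : c.IsCycle := Equiv.Perm.isCycle_cycleOf σ' hmw
  have hdis_cr : c.Disjoint r := by
    intro v
    by_cases h : σ'.SameCycle w v
    · right; exact hrfixC v h
    · left; rw [hc]; exact Equiv.Perm.cycleOf_apply_of_not_sameCycle h
  have hcount_σ' : Multiset.card σ'.cycleType = 1 + Multiset.card r.cycleType := by
    conv_lhs => rw [(mul_inv_cancel_left c σ').symm]
    exact card_ct hcycc hdis_cr
  have hdcyc : d.IsCycle := by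
    apply isCycle_assemble (x := x) (by rw [hdx]; exact hw'x)
    have hchainY : ∀ u, s.SameCycle w' u → d.SameCycle x u := by
      intro u hu
      have hlink : d.SameCycle x w' := ⟨1, by rw [zpow_one, hdx]⟩
      refine hlink.trans ?_
      have hkey : cY⁻¹ (σ' w) = w' := by
        rw [hcYinv_app, if_pos hY_sw, ← hsw', Equiv.Perm.inv_apply_self]
      have hch : d.SameCycle (cY⁻¹ (σ' w)) u := by
        apply chain hcycY.inv
        · rw [hkey]; exact Ne.symm hne1
        · rw [hcYinv_app, if_pos hu]
          intro h
          have h2 : u = s u := by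
            have h3 := congrArg s h
            rwa [Equiv.Perm.apply_inv_self] at h3
          exact sameCycle_moved hu (by rw [hsw']; exact hne1) h2.symm
        · intro v hv hvp
          have hscv : s.SameCycle w' v := by
            by_contra hcon
            exact hv (hcYinv_fix v hcon)
          rw [hdY v hscv hvp, hcYinv_app, if_pos hscv]
      exact hkey ▸ hch
    have hchainX : ∀ u, s.SameCycle w u → d.SameCycle x u := by
      intro u hu
      have hlink : d.SameCycle x (σ' w') := by
        refine ((hchainY (σ' w) hY_sw).trans ⟨1, by rw [zpow_one, hdsw]⟩)
      refine hlink.trans ?_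
      have hkey : cX w = σ' w' := by rw [hcX_app, if_pos Equiv.Perm.SameCycle.rfl, hsw]
      have hch : d.SameCycle (cX w) u := by
        apply chain hcycX
        · rw [hkey]; exact hne2
        · rw [hcX_app, if_pos hu]
          exact sameCycle_moved hu (by rw [hsw]; exact hne2)
        · intro v hv hvp
          have hscv : s.SameCycle w v := by
            by_contra hcon
            exact hv (hcX_fix v hcon)
          rw [hdX v hscv hvp, hcX_app, if_pos hscv]
      exact hkey ▸ hch
    intro y hy
    have hy' : y = x ∨ s.SameCycle w y ∨ s.SameCycle w' y := by
      by_contra hcon; push_neg at hcon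
      exact hy (hdfix y hcon.1 hcon.2.1 hcon.2.2)
    rcases hy' with rfl | hy' | hy'
    · exact Equiv.Perm.SameCycle.rfl
    · exact hchainX y hy'
    · exact hchainY y hy'
  have hdis_dr : d.Disjoint r := by
    intro v
    by_cases h : σ'.SameCycle w v
    · right; exact hrfixC v h
    · by_cases hvx : v = x
      · right; rw [hvx, hr_app, if_neg (fun hh => hsc_fix w hmw hh), hfix]
      · left
        exact hdfix v hvx (fun hh => h (hXtoC v hh))
          (fun hh => h (hsc.trans (hYtoC v hh)))
  have hcount_τ : Multiset.card τ.cycleType = 1 + Multiset.card r.cycleType :=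
    card_ct hdcyc hdis_dr
  have hmono := hmin.2 τ htf
  rw [numCycles_eq σ, numCycles_eq τ] at hmono
  rw [numCycles_eq σ, numCycles_eq σ'] at hlt
  omega

end Aux

theorem stmt6 {V : Type*} [Fintype V] (G : SimpleGraph V) (h2 : TwoK2Free G)
    (ht : Tough 2 G) (σ : Equiv.Perm V) (hσ : IsMinTwoFactor G σ)
    (hcyc : 1 < numCycles σ) :
    _root_.IsIndepSet G {x : V | CoAbsorbable G σ x} := by
  classical
  rintro x hx y hy hxy
  obtain ⟨σx, hσx, hltx⟩ := hx
  obtain ⟨σy, hσy, hlty⟩ := hy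
  set ISet := {n | ∃ s : Finset V, _root_.IsIndepSet G ↑s ∧ s.card = n} with hISet
  have hbdd : BddAbove ISet := ⟨Fintype.card V, fun n ⟨s, _, hc⟩ => hc ▸ s.card_le_univ⟩
  have hle_indep : ∀ s : Finset V, _root_.IsIndepSet G ↑s → s.card ≤ _root_.indepNum G := fun s hs =>
    le_csSup hbdd ⟨s, hs, rfl⟩
  set Nx := Finset.univ.filter (fun v => G.Adj x v) with hNx
  set Ny := Finset.univ.filter (fun v => G.Adj y v) with hNy
  have hmemNx : ∀ v, v ∈ Nx ↔ G.Adj x v := by intro v; simp [hNx]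
  have hmemNy : ∀ v, v ∈ Ny ↔ G.Adj y v := by intro v; simp [hNy]
  have hkey : ∀ (x0 : V) (σ0 : Equiv.Perm V), IsTwoFactorAvoiding G x0 σ0 →
      numCycles σ0 < numCycles σ →
      _root_.IsIndepSet G ↑(insert x0 ((Finset.univ.filter (fun v => G.Adj x0 v)).image σ0)) := by
    intro x0 σ0 h0 hlt0
    intro a ha b hb hab
    simp only [Finset.coe_insert, Set.mem_insert_iff, Finset.coe_image, Set.mem_image,
      Finset.mem_coe, Finset.mem_filter, Finset.mem_univ, true_and] at ha hb
    rcases ha with rfl | ⟨u, hu, rfl⟩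
    · rcases hb with rfl | ⟨v, hv, rfl⟩
      · exact G.irrefl hab
      · exact no_insert hσ h0 hlt0 hv hab
    · rcases hb with rfl | ⟨v, hv, rfl⟩
      · exact no_insert hσ h0 hlt0 hu hab.symm
      · by_cases huv : u = v
        · subst huv; exact G.irrefl hab
        · by_cases hscase : σ0 u = v
          · exact no_insert hσ h0 hlt0 hu (by rw [hscase]; exact hv)
          · by_cases hscase2 : σ0 v = u
            · exact no_insert hσ h0 hlt0 hv (by rw [hscase2]; exact hu)
            · by_cases hsc : σ0.SameCycle u v
              · exact no_same hσ h0 hlt0 hu hv hsc huv hscase hscase2 hab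
              · exact no_cross hσ h0 hlt0 hu hv hsc hab
  have hcard : ∀ (x0 : V) (σ0 : Equiv.Perm V), IsTwoFactorAvoiding G x0 σ0 →
      (insert x0 ((Finset.univ.filter (fun v => G.Adj x0 v)).image σ0)).card
        = (Finset.univ.filter (fun v => G.Adj x0 v)).card + 1 := by
    intro x0 σ0 h0
    rw [Finset.card_insert_of_notMem, Finset.card_image_of_injective _ σ0.injective]
    intro hmem
    obtain ⟨u, hu, heq⟩ := Finset.mem_image.1 hmem
    have hux : u ≠ x0 := fun h => G.irrefl (h ▸ (Finset.mem_filter.1 hu).2)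
    exact hux (σ0.injective (by rw [heq, h0.1]))
  have haX : Nx.card + 1 ≤ _root_.indepNum G := by
    rw [hNx, ← hcard x σx hσx]
    exact hle_indep _ (hkey x σx hσx hltx)
  have haY : Ny.card + 1 ≤ _root_.indepNum G := by
    rw [hNy, ← hcard y σy hσy]
    exact hle_indep _ (hkey y σy hσy hlty)
  set A := insert x Nx with hA
  set B := insert y Ny with hB
  set I := (A ∪ B)ᶜ with hI
  have hmemI : ∀ v, v ∈ I ↔ (v ≠ x ∧ ¬ G.Adj x v) ∧ (v ≠ y ∧ ¬ G.Adj y v) := by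
    intro v
    rw [hI, Finset.mem_compl, Finset.mem_union, hA, hB, Finset.mem_insert, Finset.mem_insert,
      hmemNx v, hmemNy v]
    tauto
  have hIindep : _root_.IsIndepSet G ↑I := by
    intro a ha b hb hab2
    rw [Finset.mem_coe, hmemI] at ha hb
    exact h2 ⟨x, y, a, b, hxy, hab2, Ne.symm ha.1.1, Ne.symm hb.1.1, Ne.symm ha.2.1,
      Ne.symm hb.2.1, ha.1.2, hb.1.2, ha.2.2, hb.2.2⟩
  have hIle : I.card ≤ _root_.indepNum G := hle_indep _ hIindep
  have hxA : x ∈ A := Finset.mem_insert_self _ _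
  have hyB : y ∈ B := Finset.mem_insert_self _ _
  have hxB : x ∈ B := Finset.mem_insert_of_mem ((hmemNy x).2 hxy.symm)
  have hyA : y ∈ A := Finset.mem_insert_of_mem ((hmemNx y).2 hxy)
  have hxyne : x ≠ y := hxy.ne
  have hsub : ({x, y} : Finset V) ⊆ A ∩ B := by
    intro v hv
    simp only [Finset.mem_insert, Finset.mem_singleton] at hv
    rcases hv with rfl | rfl
    · exact Finset.mem_inter.2 ⟨hxA, hxB⟩
    · exact Finset.mem_inter.2 ⟨hyA, hyB⟩
  have hcard2 : 2 ≤ (A ∩ B).card := by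
    calc 2 = ({x, y} : Finset V).card := by
          rw [Finset.card_insert_of_notMem (by simp [hxyne]), Finset.card_singleton]
    _ ≤ _ := Finset.card_le_card hsub
  have hunion : (A ∪ B).card + 2 ≤ A.card + B.card := by
    have h3 := Finset.card_union_add_card_inter A B
    omega
  have hcardA : A.card ≤ Nx.card + 1 := Finset.card_insert_le _ _
  have hcardB : B.card ≤ Ny.card + 1 := Finset.card_insert_le _ _
  have hcardI : I.card = Fintype.card V - (A ∪ B).card := by rw [hI, Finset.card_compl]
  have hABle : (A ∪ B).card ≤ Fintype.card V := Finset.card_le_univ _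
  have hIcard' : Fintype.card V ≤ I.card + Nx.card + Ny.card := by omega
  have h2indep : 2 ≤ _root_.indepNum G := by
    have h1le : 0 < Nx.card := Finset.card_pos.2 ⟨y, (hmemNx y).2 hxy⟩
    omega
  have hnonempty : ISet.Nonempty := ⟨0, ∅, by intro a ha; simp at ha, by simp⟩
  have hmax : _root_.indepNum G ∈ ISet := Nat.sSup_mem hnonempty hbdd
  obtain ⟨smax, hsmax_ind, hsmax_card⟩ := hmax
  have hcompEq : compCount (G.induce (↑smax : Set V)) = smax.card := by
    have hreach : ∀ (a b : (↑smax : Set V)), (G.induce (↑smax : Set V)).Reachable a b →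
        a = b := by
      intro a b hr
      obtain ⟨p⟩ := hr
      cases p with
      | nil => rfl
      | cons h p =>
        exfalso
        exact hsmax_ind _ a.2 _ (Subtype.coe_prop _) h
    have hbij : Function.Bijective ((G.induce (↑smax : Set V)).connectedComponentMk) := by
      constructor
      · intro a b hab
        exact hreach a b (SimpleGraph.ConnectedComponent.exact hab)
      · intro c
        exact c.exists_rep
    unfold compCount
    rw [← Nat.card_eq_of_bijective _ hbij, Nat.card_coe_set_eq, Set.ncard_coe_finset]
  have htough : 3 * _root_.indepNum G ≤ Fintype.card V := by
    have happ := ht smaxᶜ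
    rw [show ((↑(smaxᶜ) : Set V))ᶜ = (↑smax : Set V) by
      rw [Finset.coe_compl, compl_compl]] at happ
    rw [hcompEq, hsmax_card] at happ
    have h3 := happ (by omega)
    rw [Finset.card_compl, hsmax_card] at h3
    have hle2 : _root_.indepNum G ≤ Fintype.card V := hsmax_card ▸ smax.card_le_univ
    have h4 : ((Fintype.card V - _root_.indepNum G : ℕ) : ℝ)
        = (Fintype.card V : ℝ) - (_root_.indepNum G : ℝ) := by
      push_cast [hle2]
      ring
    rw [h4] at h3
    have h5 : (3 : ℝ) * (_root_.indepNum G : ℝ) ≤ (Fintype.card V : ℝ) := by linarith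
    exact_mod_cast h5
  omega
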